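/- Let P₀ = N(−μ, 1), P₁ = N(μ, 1) with y₀(x) = 1[x > −μ], y₁(x) = 1[x < μ], and let H_interval be the class of interval indicator classifiers 1[x ∈ (a,b)] with a, b ∈ ℝ ∪ {±∞}. Then the benefit-of-splitting under H_interval is at most exp(−2μ²), and hence tends to 0 as μ → ∞. -/

import Mathlib

open MeasureTheory ProbabilityTheory Filter

/-- Group risk under ℓ₁ loss. -/
noncomputable def risk {X : Type*} [MeasurableSpace X]
    (P : Measure X) (y h : X → ℝ) : ℝ := ∫ x, |h x - y x| ∂P

/-- Benefit-of-splitting. -/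
noncomputable def benefitOfSplitting {X : Type*} [MeasurableSpace X]
    (P₀ P₁ : Measure X) (y₀ y₁ : X → ℝ) (H : Set (X → ℝ)) : ℝ :=
  sInf ((fun h => max (risk P₀ y₀ h) (risk P₁ y₁ h)) '' H)
    - max (sInf (risk P₀ y₀ '' H)) (sInf (risk P₁ y₁ '' H))

/-- Interval indicator classifiers `1[x ∈ (a,b)]` with `a, b ∈ ℝ ∪ {±∞}`
(threshold functions and constants are included). -/
def Hinterval : Set (ℝ → ℝ) :=
  {h | ∃ a b : EReal,
    h = fun x : ℝ => if a < (x : EReal) ∧ (x : EReal) < b then (1:ℝ) else 0}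

lemma risk_nonneg {X : Type*} [MeasurableSpace X]
    (P : Measure X) (y h : X → ℝ) : 0 ≤ risk P y h :=
  integral_nonneg fun _ => abs_nonneg _

lemma gauss_tail_right (μ : ℝ) (hμ : 0 < μ) :
    ((gaussianReal (-μ) 1) (Set.Ici μ)).toReal ≤ Real.exp (-2*μ^2) := by
  rw [gaussianReal_apply_eq_integral _ one_ne_zero,
    ENNReal.toReal_ofReal (setIntegral_nonneg measurableSet_Ici
      (fun x _ => gaussianPDFReal_nonneg _ _ _))]
  have h1 : ∫ x in Set.Ici μ, gaussianPDFReal (-μ) 1 x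
      ≤ ∫ x in Set.Ici μ, Real.exp (-2*μ^2) * gaussianPDFReal μ 1 x := by
    refine setIntegral_mono_on (integrable_gaussianPDFReal _ _).integrableOn
      ((integrable_gaussianPDFReal _ _).const_mul _).integrableOn measurableSet_Ici
      (fun x hx => ?_)
    simp only [gaussianPDFReal, NNReal.coe_one, mul_one]
    rw [mul_comm (Real.exp _), mul_assoc, ← Real.exp_add]
    gcongr
    have hx' : μ ≤ x := hx
    nlinarith
  refine h1.trans ?_
  rw [integral_const_mul]
  calc Real.exp (-2*μ^2) * ∫ x in Set.Ici μ, gaussianPDFReal μ 1 x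
      ≤ Real.exp (-2*μ^2) * ∫ x, gaussianPDFReal μ 1 x := by
        exact mul_le_mul_of_nonneg_left (setIntegral_le_integral (integrable_gaussianPDFReal _ _)
          (ae_of_all _ (gaussianPDFReal_nonneg _ _))) (Real.exp_pos _).le
    _ = Real.exp (-2*μ^2) := by rw [integral_gaussianPDFReal_eq_one _ one_ne_zero, mul_one]

lemma gauss_tail_left (μ : ℝ) (hμ : 0 < μ) :
    ((gaussianReal μ 1) (Set.Iic (-μ))).toReal ≤ Real.exp (-2*μ^2) := by
  rw [gaussianReal_apply_eq_integral _ one_ne_zero,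
    ENNReal.toReal_ofReal (setIntegral_nonneg measurableSet_Iic
      (fun x _ => gaussianPDFReal_nonneg _ _ _))]
  have h1 : ∫ x in Set.Iic (-μ), gaussianPDFReal μ 1 x
      ≤ ∫ x in Set.Iic (-μ), Real.exp (-2*μ^2) * gaussianPDFReal (-μ) 1 x := by
    refine setIntegral_mono_on (integrable_gaussianPDFReal _ _).integrableOn
      ((integrable_gaussianPDFReal _ _).const_mul _).integrableOn measurableSet_Iic
      (fun x hx => ?_)
    simp only [gaussianPDFReal, NNReal.coe_one, mul_one]
    rw [mul_comm (Real.exp _), mul_assoc, ← Real.exp_add]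
    gcongr
    have hx' : x ≤ -μ := hx
    nlinarith
  refine h1.trans ?_
  rw [integral_const_mul]
  calc Real.exp (-2*μ^2) * ∫ x in Set.Iic (-μ), gaussianPDFReal (-μ) 1 x
      ≤ Real.exp (-2*μ^2) * ∫ x, gaussianPDFReal (-μ) 1 x := by
        exact mul_le_mul_of_nonneg_left (setIntegral_le_integral (integrable_gaussianPDFReal _ _)
          (ae_of_all _ (gaussianPDFReal_nonneg _ _))) (Real.exp_pos _).le
    _ = Real.exp (-2*μ^2) := by rw [integral_gaussianPDFReal_eq_one _ one_ne_zero, mul_one]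

lemma benefit_bounds (μ : ℝ) (hμ : 0 < μ) :
    0 ≤ benefitOfSplitting (gaussianReal (-μ) 1) (gaussianReal μ 1)
        (fun x => if -μ < x then (1:ℝ) else 0)
        (fun x => if x < μ then (1:ℝ) else 0) Hinterval ∧
    benefitOfSplitting (gaussianReal (-μ) 1) (gaussianReal μ 1)
        (fun x => if -μ < x then (1:ℝ) else 0)
        (fun x => if x < μ then (1:ℝ) else 0) Hinterval ≤ Real.exp (-2 * μ ^ 2) := by
  set P₀ := gaussianReal (-μ) 1
  set P₁ := gaussianReal μ 1
  set y₀ : ℝ → ℝ := fun x => if -μ < x then (1:ℝ) else 0 with hy₀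
  set y₁ : ℝ → ℝ := fun x => if x < μ then (1:ℝ) else 0 with hy₁
  -- the perfect classifiers belong to Hinterval
  have mem0 : y₀ ∈ Hinterval := by
    refine ⟨(-μ : ℝ), ⊤, ?_⟩
    funext x
    simp only [EReal.coe_lt_top, and_true, EReal.coe_lt_coe_iff]
    rfl
  have mem1 : y₁ ∈ Hinterval := by
    refine ⟨⊥, (μ : ℝ), ?_⟩
    funext x
    simp only [EReal.bot_lt_coe, true_and, EReal.coe_lt_coe_iff]
    rfl
  have r00 : risk P₀ y₀ y₀ = 0 := by simp [risk]
  have r11 : risk P₁ y₁ y₁ = 0 := by simp [risk]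
  -- the infima of the single-group risks are 0
  have hInf0 : sInf (risk P₀ y₀ '' Hinterval) = 0 := by
    refine le_antisymm ?_ (le_csInf ⟨0, y₀, mem0, r00⟩ ?_)
    · exact csInf_le ⟨0, fun r ⟨h, _, hr⟩ => hr ▸ risk_nonneg _ _ _⟩ ⟨y₀, mem0, r00⟩
    · rintro r ⟨h, -, rfl⟩; exact risk_nonneg _ _ _
  have hInf1 : sInf (risk P₁ y₁ '' Hinterval) = 0 := by
    refine le_antisymm ?_ (le_csInf ⟨0, y₁, mem1, r11⟩ ?_)
    · exact csInf_le ⟨0, fun r ⟨h, _, hr⟩ => hr ▸ risk_nonneg _ _ _⟩ ⟨y₁, mem1, r11⟩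
    · rintro r ⟨h, -, rfl⟩; exact risk_nonneg _ _ _
  -- the shared classifier: indicator of (-μ, μ)
  set hs : ℝ → ℝ := fun x : ℝ =>
    if ((-μ : ℝ) : EReal) < (x : EReal) ∧ (x : EReal) < ((μ : ℝ) : EReal) then (1:ℝ) else 0
    with hhs
  have mems : hs ∈ Hinterval := ⟨(-μ : ℝ), (μ : ℝ), rfl⟩
  have hs_eq : hs = fun x : ℝ => if -μ < x ∧ x < μ then (1:ℝ) else 0 := by
    funext x; simp only [hhs, EReal.coe_lt_coe_iff]
  -- risk of the shared classifier on group 0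
  have rs0 : risk P₀ y₀ hs ≤ Real.exp (-2 * μ ^ 2) := by
    have heq : (fun x => |hs x - y₀ x|)
        = Set.indicator (Set.Ici μ) (1 : ℝ → ℝ) := by
      funext x
      rw [hs_eq]
      simp only [hy₀, Set.indicator, Set.mem_Ici, Pi.one_apply]
      split_ifs <;> simp_all <;> linarith
    rw [risk, heq, integral_indicator_one measurableSet_Ici]
    simpa [measureReal_def] using gauss_tail_right μ hμ
  have rs1 : risk P₁ y₁ hs ≤ Real.exp (-2 * μ ^ 2) := by
    have heq : (fun x => |hs x - y₁ x|)
        = Set.indicator (Set.Iic (-μ)) (1 : ℝ → ℝ) := by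
      funext x
      rw [hs_eq]
      simp only [hy₁, Set.indicator, Set.mem_Iic, Pi.one_apply]
      split_ifs <;> simp_all <;> linarith
    rw [risk, heq, integral_indicator_one measurableSet_Iic]
    simpa [measureReal_def] using gauss_tail_left μ hμ
  -- the joint infimum
  have hbddS : BddBelow ((fun h => max (risk P₀ y₀ h) (risk P₁ y₁ h)) '' Hinterval) :=
    ⟨0, fun r ⟨h, _, hr⟩ => hr ▸ le_max_of_le_left (risk_nonneg _ _ _)⟩
  have hSle : sInf ((fun h => max (risk P₀ y₀ h) (risk P₁ y₁ h)) '' Hinterval)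
      ≤ Real.exp (-2 * μ ^ 2) :=
    (csInf_le hbddS ⟨hs, mems, rfl⟩).trans (max_le rs0 rs1)
  have hSge : 0 ≤ sInf ((fun h => max (risk P₀ y₀ h) (risk P₁ y₁ h)) '' Hinterval) := by
    refine le_csInf ⟨_, hs, mems, rfl⟩ ?_
    rintro r ⟨h, -, rfl⟩
    exact le_max_of_le_left (risk_nonneg _ _ _)
  constructor
  · rw [benefitOfSplitting, hInf0, hInf1]
    simpa using hSge
  · rw [benefitOfSplitting, hInf0, hInf1]
    simpa using hSle

theorem benefitOfSplitting_interval_small :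
    (∀ μ : ℝ, 0 < μ →
      benefitOfSplitting (gaussianReal (-μ) 1) (gaussianReal μ 1)
        (fun x => if -μ < x then (1:ℝ) else 0)
        (fun x => if x < μ then (1:ℝ) else 0)
        Hinterval ≤ Real.exp (-2 * μ ^ 2)) ∧
    Tendsto (fun μ : ℝ =>
      benefitOfSplitting (gaussianReal (-μ) 1) (gaussianReal μ 1)
        (fun x => if -μ < x then (1:ℝ) else 0)
        (fun x => if x < μ then (1:ℝ) else 0)
        Hinterval) atTop (nhds 0) := by
  refine ⟨fun μ hμ => (benefit_bounds μ hμ).2, ?_⟩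
  have hexp : Tendsto (fun μ : ℝ => Real.exp (-2 * μ ^ 2)) atTop (nhds 0) := by
    apply Real.tendsto_exp_atBot.comp
    have h2 : Tendsto (fun μ : ℝ => μ ^ 2) atTop atTop :=
      tendsto_pow_atTop two_ne_zero
    exact (tendsto_neg_atBot_iff.mpr (h2.const_mul_atTop two_pos)).congr
      (fun x => by ring_nf)
  refine tendsto_of_tendsto_of_tendsto_of_le_of_le' tendsto_const_nhds hexp ?_ ?_
  · filter_upwards [eventually_gt_atTop 0] with μ hμ using (benefit_bounds μ hμ).1
  · filter_upwards [eventually_gt_atTop 0] with μ hμ using (benefit_bounds μ hμ).2
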